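/- arXiv:1201.4599 — 3 statements merged into one kernel-verified Lean document; each statement's English description precedes it below -/
import Mathlib

section
/- Let X be a set, φ : X × X → ℂ a kernel of positive type, and suppose (E, e) and (E', e') are two GNS pairs for φ, i.e. φ(x,y) = ⟪e(x), e(y)⟫_E = ⟪e'(x), e'(y)⟫_{E'} for all x, y, and the linear span of e(X) is dense in E and the linear span of e'(X) is dense in E'. Then there exists a unique linear isometric isomorphism u : E → E' with e' = u ∘ e. -/
open Finsupp in
private lemma gns_aux {X : Type*} {E E' : Type*}
    [NormedAddCommGroup E] [InnerProductSpace ℂ E] [CompleteSpace E]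
    [NormedAddCommGroup E'] [InnerProductSpace ℂ E'] [CompleteSpace E']
    (e : X → E) (e' : X → E')
    (h : ∀ x y, (inner ℂ (e x) (e y) : ℂ) = inner ℂ (e' x) (e' y))
    (hdense : Dense (Submodule.span ℂ (Set.range e) : Set E)) :
    ∃ F : E →L[ℂ] E', Isometry F ∧
      ∀ c : X →₀ ℂ, F (linearCombination ℂ e c) = linearCombination ℂ e' c := by
  set T : (X →₀ ℂ) →ₗ[ℂ] E := linearCombination ℂ e with hT
  set T' : (X →₀ ℂ) →ₗ[ℂ] E' := linearCombination ℂ e' with hT'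
  have key : ∀ c d : X →₀ ℂ, (inner ℂ (T c) (T d) : ℂ) = inner ℂ (T' c) (T' d) := by
    intro c d
    rw [hT, hT', linearCombination_apply, linearCombination_apply,
      linearCombination_apply, linearCombination_apply, Finsupp.sum, Finsupp.sum,
      Finsupp.sum, Finsupp.sum, sum_inner, sum_inner]
    refine Finset.sum_congr rfl fun x _ => ?_
    rw [inner_sum, inner_sum]
    refine Finset.sum_congr rfl fun y _ => ?_
    rw [inner_smul_left, inner_smul_left, inner_smul_right, inner_smul_right, h]
  have hker : LinearMap.ker T ≤ LinearMap.ker T' := by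
    intro c hc
    rw [LinearMap.mem_ker] at hc ⊢
    have : (inner ℂ (T' c) (T' c) : ℂ) = 0 := by rw [← key, hc, inner_zero_left]
    exact inner_self_eq_zero.mp this
  -- the map on the range of T
  set S : Submodule ℂ E := LinearMap.range T with hS
  have hSspan : S = Submodule.span ℂ (Set.range e) := Finsupp.range_linearCombination (R := ℂ) (v := e)
  set g : ((X →₀ ℂ) ⧸ LinearMap.ker T) →ₗ[ℂ] E' := (LinearMap.ker T).liftQ T' hker with hg
  set q := LinearMap.quotKerEquivRange T with hq
  set f0 : S →ₗ[ℂ] E' := g ∘ₗ (q.symm : S →ₗ[ℂ] _) with hf0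
  have hf0T : ∀ (c : X →₀ ℂ) (hc : T c ∈ S), f0 ⟨T c, hc⟩ = T' c := by
    intro c hc
    have hqs : q.symm ⟨T c, hc⟩ = Submodule.Quotient.mk c := by
      rw [LinearEquiv.symm_apply_eq]
      exact Subtype.ext (LinearMap.quotKerEquivRange_apply_mk T c)
    simp [hf0, hqs, hg]
  have hf0norm : ∀ v : S, ‖f0 v‖ = ‖v‖ := by
    intro v
    obtain ⟨c, hc⟩ := v.2
    have hv : v = ⟨T c, LinearMap.mem_range_self T c⟩ := Subtype.ext hc.symm
    rw [hv, hf0T]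
    have h2 : (inner ℂ (T' c) (T' c) : ℂ) = inner ℂ (T c) (T c) := (key c c).symm
    have : ‖T' c‖ = ‖T c‖ := by
      rw [@norm_eq_sqrt_re_inner ℂ, @norm_eq_sqrt_re_inner ℂ, h2]
    exact this
  set fI : S →ₗᵢ[ℂ] E' := ⟨f0, hf0norm⟩ with hfI
  have hdr : DenseRange (S.subtypeL) := by
    have : Set.range (S.subtypeL) = (S : Set E) := Subtype.range_coe
    rw [DenseRange, this, hSspan]
    exact hdense
  have hui : IsUniformInducing (S.subtypeL) := isUniformEmbedding_subtype_val.isUniformInducing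
  set F : E →L[ℂ] E' := fI.toContinuousLinearMap.extend S.subtypeL with hF
  have hext : ∀ v : S, F v = f0 v := fun v =>
    ContinuousLinearMap.extend_eq fI.toContinuousLinearMap hdr hui v
  have hFT : ∀ c : X →₀ ℂ, F (T c) = T' c := by
    intro c
    have := hext ⟨T c, LinearMap.mem_range_self T c⟩
    rw [this, hf0T]
  have hFiso : Isometry F := by
    refine AddMonoidHomClass.isometry_of_norm _ ?_
    have hclosed : IsClosed {z : E | ‖F z‖ = ‖z‖} :=
      isClosed_eq (continuous_norm.comp F.continuous) continuous_norm
    exact isClosed_property hdr hclosed fun v => by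
      show ‖F (S.subtypeL v)‖ = ‖S.subtypeL v‖
      rw [Submodule.subtypeL_apply, hext v, hf0norm v]; rfl
  exact ⟨F, hFiso, hFT⟩

open ComplexOrder in
theorem stmt_1 {X : Type*} {E E' : Type*}
    [NormedAddCommGroup E] [InnerProductSpace ℂ E] [CompleteSpace E]
    [NormedAddCommGroup E'] [InnerProductSpace ℂ E'] [CompleteSpace E']
    (φ : X → X → ℂ) (e : X → E) (e' : X → E')
    (hpos : ∀ (n : ℕ) (x : Fin n → X) (c : Fin n → ℂ),
      0 ≤ ∑ i : Fin n, ∑ j : Fin n, starRingEnd ℂ (c i) * c j * φ (x i) (x j))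
    (he : ∀ x y, φ x y = inner ℂ (e x) (e y))
    (he' : ∀ x y, φ x y = inner ℂ (e' x) (e' y))
    (hdense : Dense (Submodule.span ℂ (Set.range e) : Set E))
    (hdense' : Dense (Submodule.span ℂ (Set.range e') : Set E')) :
    ∃! u : E ≃ₗᵢ[ℂ] E', ∀ x, e' x = u (e x) := by
  have hinner : ∀ x y, (inner ℂ (e x) (e y) : ℂ) = inner ℂ (e' x) (e' y) := fun x y => by
    rw [← he, ← he']
  obtain ⟨F, hFiso, hFT⟩ := gns_aux e e' hinner hdense
  obtain ⟨G, hGiso, hGT⟩ := gns_aux e' e (fun x y => (hinner x y).symm) hdense'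
  -- G ∘ F = id and F ∘ G = id
  have hdrE : DenseRange ((Submodule.span ℂ (Set.range e)).subtypeL) := by
    have : Set.range ((Submodule.span ℂ (Set.range e)).subtypeL) =
        ((Submodule.span ℂ (Set.range e)) : Set E) := Subtype.range_coe
    rw [DenseRange, this]; exact hdense
  have hdrE' : DenseRange ((Submodule.span ℂ (Set.range e')).subtypeL) := by
    have : Set.range ((Submodule.span ℂ (Set.range e')).subtypeL) =
        ((Submodule.span ℂ (Set.range e')) : Set E') := Subtype.range_coe
    rw [DenseRange, this]; exact hdense'
  have hGF : ∀ z : E, G (F z) = z := by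
    have hclosed : IsClosed {z : E | G (F z) = z} :=
      isClosed_eq (G.continuous.comp F.continuous) continuous_id
    refine isClosed_property hdrE hclosed fun v => ?_
    have hv : (v : E) ∈ LinearMap.range (Finsupp.linearCombination ℂ e) := by
      rw [Finsupp.range_linearCombination]; exact v.2
    obtain ⟨c, hc⟩ := hv
    simp only [Set.mem_setOf_eq, Submodule.subtypeL_apply]
    rw [← hc, hFT, hGT]
  have hFG : ∀ z : E', F (G z) = z := by
    have hclosed : IsClosed {z : E' | F (G z) = z} :=
      isClosed_eq (F.continuous.comp G.continuous) continuous_id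
    refine isClosed_property hdrE' hclosed fun v => ?_
    have hv : (v : E') ∈ LinearMap.range (Finsupp.linearCombination ℂ e') := by
      rw [Finsupp.range_linearCombination]; exact v.2
    obtain ⟨c, hc⟩ := hv
    simp only [Set.mem_setOf_eq, Submodule.subtypeL_apply]
    rw [← hc, hGT, hFT]
  set uL : E ≃ₗ[ℂ] E' := LinearEquiv.ofLinear (F : E →ₗ[ℂ] E') (G : E' →ₗ[ℂ] E)
    (LinearMap.ext fun z => hFG z) (LinearMap.ext fun z => hGF z) with huL
  set u : E ≃ₗᵢ[ℂ] E' := ⟨uL, fun z => hFiso.norm_map_of_map_zero (map_zero F) z⟩ with hu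
  have hue : ∀ x, e' x = u (e x) := by
    intro x
    have := hFT (Finsupp.single x 1)
    rw [Finsupp.linearCombination_single, Finsupp.linearCombination_single,
      one_smul, one_smul] at this
    exact this.symm
  refine ⟨u, hue, ?_⟩
  intro u' hu'
  have heqOn : Set.EqOn ⇑u' ⇑u (Set.range e) := by
    rintro _ ⟨x, rfl⟩
    rw [← hu' x, ← hue x]
  have heqSpan : Set.EqOn ⇑u' ⇑u ((Submodule.span ℂ (Set.range e)) : Set E) := by
    have := LinearMap.eqOn_span' (R := ℂ) (f := (u'.toLinearEquiv : E →ₗ[ℂ] E'))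
      (g := (u.toLinearEquiv : E →ₗ[ℂ] E')) heqOn
    exact this
  have : ⇑u' = ⇑u := Continuous.ext_on hdense u'.continuous u.continuous heqSpan
  exact LinearIsometryEquiv.ext fun z => congrFun this z
end

section
/- Let ψ : X × X → ℝ be a kernel conditionally of negative type and let t ≥ 0. Then the kernel φ_t(x,y) = exp(−t ψ(x,y)) is of positive type on X (Schoenberg's theorem, one direction). -/
open Finset Matrix
open scoped MatrixOrder

/-- Schur product theorem, quadratic-form version. -/
lemma schur_quad {n : ℕ} (A B : Matrix (Fin n) (Fin n) ℝ) (hA : A.PosSemidef)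
    (hB : ∀ w : Fin n → ℝ, 0 ≤ ∑ i, ∑ j, w i * w j * B i j) (c : Fin n → ℝ) :
    0 ≤ ∑ i, ∑ j, c i * c j * (A i j * B i j) := by
  obtain ⟨S, hSA⟩ := CStarAlgebra.nonneg_iff_eq_star_mul_self.mp hA.nonneg
  have hAij : ∀ i j, A i j = ∑ k, S k i * S k j := by
    intro i j
    rw [hSA, Matrix.mul_apply]
    simp [Matrix.star_apply]
  calc (0:ℝ) ≤ ∑ k, ∑ i, ∑ j, (c i * S k i) * (c j * S k j) * B i j := by
        exact Finset.sum_nonneg fun k _ => hB (fun i => c i * S k i)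
    _ = ∑ i, ∑ j, c i * c j * (A i j * B i j) := by
        rw [Finset.sum_comm]
        refine Finset.sum_congr rfl fun i _ => ?_
        rw [Finset.sum_comm]
        refine Finset.sum_congr rfl fun j _ => ?_
        rw [hAij i j, Finset.sum_mul, Finset.mul_sum]
        exact Finset.sum_congr rfl fun k _ => by ring

lemma hadpow_quad {n : ℕ} (A : Matrix (Fin n) (Fin n) ℝ) (hA : A.PosSemidef) :
    ∀ (k : ℕ) (c : Fin n → ℝ), 0 ≤ ∑ i, ∑ j, c i * c j * (A i j) ^ k := by
  intro k
  induction k with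
  | zero =>
    intro c
    simp only [pow_zero, mul_one]
    rw [← Finset.sum_mul_sum]
    exact mul_self_nonneg _
  | succ k ih =>
    intro c
    have h := schur_quad A (Matrix.of fun i j => A i j ^ k) hA (fun w => ih w) c
    simp only [Matrix.of_apply] at h
    calc (0:ℝ) ≤ ∑ i, ∑ j, c i * c j * (A i j * A i j ^ k) := h
      _ = ∑ i, ∑ j, c i * c j * (A i j) ^ (k+1) := by
          refine Finset.sum_congr rfl fun i _ => Finset.sum_congr rfl fun j _ => ?_
          rw [pow_succ']

lemma aug_sum {α : Type*} (ψ : α → α → ℝ) {n : ℕ} (y0 : α) (y : Fin n → α)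
    (s : ℝ) (v : Fin n → ℝ) :
    ∑ i : Fin (n+1), ∑ j : Fin (n+1),
      ψ ((Fin.cons y0 y : Fin (n+1) → α) i) ((Fin.cons y0 y : Fin (n+1) → α) j) *
        (Fin.cons s v : Fin (n+1) → ℝ) i * (Fin.cons s v : Fin (n+1) → ℝ) j
    = ψ y0 y0 * s * s + (∑ j, ψ y0 (y j) * s * v j) + (∑ i, ψ (y i) y0 * v i * s)
      + ∑ i, ∑ j, ψ (y i) (y j) * v i * v j := by
  simp only [Fin.sum_univ_succ, Fin.cons_zero, Fin.cons_succ, Finset.sum_add_distrib]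
  ring

lemma pos_aux {X : Type*} (ψ : X → X → ℝ) (t : ℝ) (ht : 0 ≤ t)
    (hdiag : ∀ x, ψ x x = 0) (hsym : ∀ x y, ψ y x = ψ x y)
    (hcnt : ∀ (n : ℕ) (x : Fin n → X) (ζ : Fin n → ℝ), (∑ i, ζ i) = 0 →
      ∑ i : Fin n, ∑ j : Fin n, ψ (x i) (x j) * ζ i * ζ j ≤ 0)
    (n : ℕ) (hpos : 0 < n) (x : Fin n → X) (c : Fin n → ℝ) :
      0 ≤ ∑ i : Fin n, ∑ j : Fin n, c i * c j * Real.exp (-t * ψ (x i) (x j)) := by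
  set x0 : X := x ⟨0, hpos⟩ with hx0
  set N : Matrix (Fin n) (Fin n) ℝ :=
    Matrix.of (fun i j => t * (ψ (x i) x0 + ψ x0 (x j) - ψ (x i) (x j))) with hN
  have hNentry : ∀ i j, N i j = t * (ψ (x i) x0 + ψ x0 (x j) - ψ (x i) (x j)) :=
    fun i j => rfl
  -- N is positive semidefinite
  have hNpsd : N.PosSemidef := by
    refine Matrix.PosSemidef.of_dotProduct_mulVec_nonneg ?_ ?_
    · ext i j
      simp only [Matrix.conjTranspose_apply, star_trivial, hNentry]
      rw [hsym x0 (x j), hsym (x i) x0, hsym (x i) (x j)]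
      ring
    · intro v
      rw [star_trivial]
      set S : ℝ := ∑ i, v i with hS
      set A : ℝ := ∑ i, ψ (x i) x0 * v i with hA
      set Q : ℝ := ∑ i, ∑ j, ψ (x i) (x j) * v i * v j with hQ
      have h1 : ∀ j, ψ x0 (x j) = ψ (x j) x0 := fun j => hsym (x j) x0
      have hsum0 : (∑ i, (Fin.cons (-S) v : Fin (n+1) → ℝ) i) = 0 := by
        simp [Fin.sum_cons, hS]
      have hH := hcnt (n + 1) (Fin.cons x0 x : Fin (n+1) → X) (Fin.cons (-S) v : Fin (n+1) → ℝ) hsum0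
      have u1 : ∑ j : Fin n, ψ x0 (x j) * -S * v j = -(S * A) := by
        calc ∑ j : Fin n, ψ x0 (x j) * -S * v j
            = ∑ j : Fin n, -S * (ψ (x j) x0 * v j) :=
              Finset.sum_congr rfl fun j _ => by rw [h1 j]; ring
          _ = -S * ∑ j : Fin n, ψ (x j) x0 * v j := (Finset.mul_sum _ _ _).symm
          _ = -(S * A) := by rw [hA]; ring
      have u2 : ∑ i : Fin n, ψ (x i) x0 * v i * -S = -(S * A) := by
        calc ∑ i : Fin n, ψ (x i) x0 * v i * -S
            = ∑ i : Fin n, -S * (ψ (x i) x0 * v i) :=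
              Finset.sum_congr rfl fun i _ => by ring
          _ = -S * ∑ i : Fin n, ψ (x i) x0 * v i := (Finset.mul_sum _ _ _).symm
          _ = -(S * A) := by rw [hA]; ring
      rw [aug_sum ψ x0 x (-S) v, hdiag x0, u1, u2, ← hQ] at hH
      have d1 : ∑ i : Fin n, ∑ j : Fin n, t * ψ (x i) x0 * (v i * v j) = t * (A * S) := by
        rw [hA, hS, Finset.sum_mul_sum, Finset.mul_sum]
        refine Finset.sum_congr rfl fun i _ => ?_
        rw [Finset.mul_sum]
        exact Finset.sum_congr rfl fun j _ => by ring
      have d2 : ∑ i : Fin n, ∑ j : Fin n, t * ψ (x j) x0 * (v i * v j) = t * (S * A) := by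
        rw [hS, hA, Finset.sum_mul_sum, Finset.mul_sum]
        refine Finset.sum_congr rfl fun i _ => ?_
        rw [Finset.mul_sum]
        exact Finset.sum_congr rfl fun j _ => by ring
      have d3 : ∑ i : Fin n, ∑ j : Fin n, t * (ψ (x i) (x j) * v i * v j) = t * Q := by
        rw [hQ, Finset.mul_sum]
        exact Finset.sum_congr rfl fun i _ => (Finset.mul_sum _ _ _).symm
      have hgoal : v ⬝ᵥ (N *ᵥ v) = t * (2 * S * A - Q) := by
        have expand : v ⬝ᵥ (N *ᵥ v) = ∑ i : Fin n, ∑ j : Fin n,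
            (t * ψ (x i) x0 * (v i * v j) + t * ψ (x j) x0 * (v i * v j)
              - t * (ψ (x i) (x j) * v i * v j)) := by
          simp only [dotProduct, Matrix.mulVec, hNentry, Finset.mul_sum, h1]
          exact Finset.sum_congr rfl fun i _ => Finset.sum_congr rfl fun j _ => by ring
        rw [expand]
        simp only [Finset.sum_add_distrib, Finset.sum_sub_distrib]
        linear_combination d1 + d2 - d3
      rw [hgoal]
      exact mul_nonneg ht (by linarith)
  -- reduce to the kernel exp(N i j)
  set d : Fin n → ℝ := fun i => c i * Real.exp (-t * ψ (x i) x0) with hd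
  have key : ∀ i j, c i * c j * Real.exp (-t * ψ (x i) (x j)) = d i * d j * Real.exp (N i j) := by
    intro i j
    have h2 : Real.exp (-t * ψ (x i) x0) * Real.exp (-t * ψ (x j) x0) * Real.exp (N i j)
        = Real.exp (-t * ψ (x i) (x j)) := by
      rw [← Real.exp_add, ← Real.exp_add]
      congr 1
      rw [hNentry i j, hsym x0 (x j)]
      ring
    simp only [hd]
    rw [← h2]
    ring
  have hexpser : ∀ y : ℝ, Real.exp y = ∑' k : ℕ, y ^ k / (Nat.factorial k : ℝ) := fun y => by
    simp [Real.exp_eq_exp_ℝ, NormedSpace.exp_eq_tsum_div]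
  have main : 0 ≤ ∑ i : Fin n, ∑ j : Fin n, d i * d j * Real.exp (N i j) := by
    calc (0:ℝ) ≤ ∑' k : ℕ, ∑ p : Fin n × Fin n, d p.1 * d p.2 * (N p.1 p.2 ^ k / (Nat.factorial k : ℝ)) := by
          refine tsum_nonneg fun k => ?_
          have h1 : ∀ p : Fin n × Fin n, d p.1 * d p.2 * (N p.1 p.2 ^ k / (Nat.factorial k : ℝ))
              = (d p.1 * d p.2 * N p.1 p.2 ^ k) * ((Nat.factorial k : ℝ))⁻¹ := fun p => by
            rw [div_eq_mul_inv]; ring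
          rw [Finset.sum_congr rfl fun p _ => h1 p, ← Finset.sum_mul]
          refine mul_nonneg ?_ (by positivity)
          rw [Fintype.sum_prod_type]
          exact hadpow_quad N hNpsd k d
      _ = ∑ p : Fin n × Fin n, ∑' k : ℕ, d p.1 * d p.2 * (N p.1 p.2 ^ k / (Nat.factorial k : ℝ)) :=
          Summable.tsum_finsetSum fun p _ => (Real.summable_pow_div_factorial _).mul_left _
      _ = ∑ p : Fin n × Fin n, d p.1 * d p.2 * Real.exp (N p.1 p.2) := by
          refine Finset.sum_congr rfl fun p _ => ?_
          rw [tsum_mul_left, hexpser]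
      _ = ∑ i : Fin n, ∑ j : Fin n, d i * d j * Real.exp (N i j) := by
          rw [Fintype.sum_prod_type]
  calc (0:ℝ) ≤ ∑ i : Fin n, ∑ j : Fin n, d i * d j * Real.exp (N i j) := main
    _ = ∑ i : Fin n, ∑ j : Fin n, c i * c j * Real.exp (-t * ψ (x i) (x j)) :=
        Finset.sum_congr rfl fun i _ => Finset.sum_congr rfl fun j _ => (key i j).symm

theorem stmt_7 {X : Type*} (ψ : X → X → ℝ) (t : ℝ) (ht : 0 ≤ t)
    (hdiag : ∀ x, ψ x x = 0) (hsym : ∀ x y, ψ y x = ψ x y)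
    (hcnt : ∀ (n : ℕ) (x : Fin n → X) (ζ : Fin n → ℝ), (∑ i, ζ i) = 0 →
      ∑ i : Fin n, ∑ j : Fin n, ψ (x i) (x j) * ζ i * ζ j ≤ 0) :
    ∀ (n : ℕ) (x : Fin n → X) (c : Fin n → ℝ),
      0 ≤ ∑ i : Fin n, ∑ j : Fin n, c i * c j * Real.exp (-t * ψ (x i) (x j)) := by
  intro n x c
  rcases n with _ | m
  · simp
  exact pos_aux ψ t ht hdiag hsym hcnt (m+1) (Nat.succ_pos m) x c
end

section
/- Uniqueness in the affine GNS representation of a CNT kernel: let ψ : X × X → ℝ, and suppose e : X → E and e' : X → E' are maps into real Hilbert spaces with ψ(x,y) = ‖e(x) − e(y)‖² = ‖e'(x) − e'(y)‖² for all x,y, such that the affine span of e(X) is dense in E and the affine span of e'(X) is dense in E'. Then there exists a unique affine isometry u : E → E' with e' = u ∘ e. -/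
open scoped RealInnerProductSpace

private lemma lc_inner {X : Type*} {E : Type*} [NormedAddCommGroup E] [InnerProductSpace ℝ E]
    (f : X → E) (c d : X →₀ ℝ) :
    ⟪Finsupp.linearCombination ℝ f c, Finsupp.linearCombination ℝ f d⟫
      = ∑ x ∈ c.support, ∑ y ∈ d.support, c x * d y * ⟪f x, f y⟫ := by
  rw [Finsupp.linearCombination_apply, Finsupp.linearCombination_apply, Finsupp.sum, Finsupp.sum,
    sum_inner]
  refine Finset.sum_congr rfl fun x _ => ?_
  rw [inner_sum]
  refine Finset.sum_congr rfl fun y _ => ?_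
  rw [real_inner_smul_left, real_inner_smul_right]; ring

private lemma extend_isom {X : Type*} {E E' : Type*}
    [NormedAddCommGroup E] [InnerProductSpace ℝ E]
    [NormedAddCommGroup E'] [InnerProductSpace ℝ E'] [CompleteSpace E']
    (f : X → E) (g : X → E')
    (hi : ∀ x y, ⟪f x, f y⟫ = ⟪g x, g y⟫)
    (hd : Dense ((Submodule.span ℝ (Set.range f) : Submodule ℝ E) : Set E)) :
    ∃ T : E →ₗᵢ[ℝ] E', ∀ x, T (f x) = g x := by
  classical
  set F := Finsupp.linearCombination ℝ f with hF
  set G := Finsupp.linearCombination ℝ g with hG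
  have hnorm : ∀ c : X →₀ ℝ, ‖G c‖ = ‖F c‖ := by
    intro c
    have h1 : ⟪F c, F c⟫ = ⟪G c, G c⟫ := by
      rw [hF, hG, lc_inner, lc_inner]
      exact Finset.sum_congr rfl fun x _ => Finset.sum_congr rfl fun y _ => by rw [hi]
    have h2 : ‖G c‖ ^ 2 = ‖F c‖ ^ 2 := by
      rw [← real_inner_self_eq_norm_sq, ← real_inner_self_eq_norm_sq, h1]
    calc ‖G c‖ = Real.sqrt (‖G c‖ ^ 2) := (Real.sqrt_sq (norm_nonneg _)).symm
      _ = Real.sqrt (‖F c‖ ^ 2) := by rw [h2]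
      _ = ‖F c‖ := Real.sqrt_sq (norm_nonneg _)
  have hker : LinearMap.ker F ≤ LinearMap.ker G := by
    intro c hc
    rw [LinearMap.mem_ker] at hc ⊢
    have : ‖G c‖ = 0 := by rw [hnorm, hc, norm_zero]
    rwa [norm_eq_zero] at this
  set T0 : ((X →₀ ℝ) ⧸ LinearMap.ker F) →ₗ[ℝ] E' := (LinearMap.ker F).liftQ G hker with hT0
  set ι := F.quotKerEquivRange with hι
  set T1 : ↥(LinearMap.range F) →ₗ[ℝ] E' := T0 ∘ₗ (ι.symm : _ →ₗ[ℝ] _) with hT1def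
  have hT1e : ∀ (c : X →₀ ℝ) (h : F c ∈ LinearMap.range F), T1 ⟨F c, h⟩ = G c := by
    intro c h
    show T0 (ι.symm ⟨F c, h⟩) = G c
    rw [hι, F.quotKerEquivRange_symm_apply_image c h, Submodule.mkQ_apply, hT0,
      Submodule.liftQ_apply]
  have hT1 : ∀ v : ↥(LinearMap.range F), ‖T1 v‖ = ‖v‖ := by
    rintro ⟨w, c, rfl⟩
    rw [hT1e c ⟨c, rfl⟩, hnorm]
    rfl
  set TI : ↥(LinearMap.range F) →ₗᵢ[ℝ] E' := ⟨T1, hT1⟩ with hTI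
  have hrange : ((LinearMap.range F : Submodule ℝ E) : Set E)
      = ((Submodule.span ℝ (Set.range f) : Submodule ℝ E) : Set E) := by
    rw [hF, Finsupp.range_linearCombination]
  have hdr : DenseRange ((LinearMap.range F).subtypeL) := by
    have : Set.range ((LinearMap.range F).subtypeL) = ((LinearMap.range F : Submodule ℝ E) : Set E) :=
      Subtype.range_coe
    rw [DenseRange, this, hrange]
    exact hd
  have hind : IsUniformInducing ((LinearMap.range F).subtypeL) :=
    isometry_subtype_coe.isUniformInducing
  set ubar := TI.toContinuousLinearMap.extend (LinearMap.range F).subtypeL with hubar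
  have hext : ∀ v : ↥(LinearMap.range F), ubar v = TI v := by
    intro v
    exact ContinuousLinearMap.extend_eq _ hdr hind v
  have hub : ∀ p : E, ‖ubar p‖ = ‖p‖ := by
    have hclosed : IsClosed {p : E | ‖ubar p‖ = ‖p‖} :=
      isClosed_eq (continuous_norm.comp ubar.continuous) continuous_norm
    intro p
    refine hdr.induction_on p hclosed ?_
    intro v
    show ‖ubar v‖ = ‖(v : E)‖
    rw [hext v, TI.norm_map]
    rfl
  refine ⟨⟨ubar.toLinearMap, hub⟩, ?_⟩
  intro x
  have hmem : f x ∈ LinearMap.range F := by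
    refine ⟨Finsupp.single x 1, ?_⟩
    rw [hF, Finsupp.linearCombination_single, one_smul]
  have h1 : F (Finsupp.single x 1) = f x := by
    rw [hF, Finsupp.linearCombination_single, one_smul]
  have h2 : (⟨f x, hmem⟩ : ↥(LinearMap.range F))
      = ⟨F (Finsupp.single x 1), ⟨Finsupp.single x 1, rfl⟩⟩ :=
    Subtype.ext h1.symm
  calc ubar (f x) = ubar ((⟨f x, hmem⟩ : ↥(LinearMap.range F)) : E) := rfl
    _ = TI ⟨f x, hmem⟩ := hext _
    _ = T1 ⟨f x, hmem⟩ := rfl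
    _ = G (Finsupp.single x 1) := by rw [h2]; exact hT1e _ _
    _ = g x := by rw [hG, Finsupp.linearCombination_single, one_smul]

theorem stmt_16 {X : Type*} {E E' : Type*}
    [NormedAddCommGroup E] [InnerProductSpace ℝ E] [CompleteSpace E]
    [NormedAddCommGroup E'] [InnerProductSpace ℝ E'] [CompleteSpace E']
    (ψ : X → X → ℝ) (e : X → E) (e' : X → E')
    (he : ∀ x y, ψ x y = ‖e x - e y‖ ^ 2)
    (he' : ∀ x y, ψ x y = ‖e' x - e' y‖ ^ 2)
    (hdense : Dense ((affineSpan ℝ (Set.range e) : AffineSubspace ℝ E) : Set E))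
    (hdense' : Dense ((affineSpan ℝ (Set.range e') : AffineSubspace ℝ E') : Set E')) :
    ∃! u : E →ᵃⁱ[ℝ] E', ∀ x, e' x = u (e x) := by
  classical
  obtain ⟨x₀⟩ : Nonempty X := by
    obtain ⟨p, hp⟩ := hdense.nonempty
    obtain ⟨q, x, rfl⟩ := (affineSpan_nonempty (k := ℝ)).mp ⟨p, hp⟩
    exact ⟨x⟩
  set f : X → E := fun x => e x - e x₀ with hf
  set g : X → E' := fun x => e' x - e' x₀ with hg
  have hinner : ∀ x y, ⟪f x, f y⟫ = ⟪g x, g y⟫ := by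
    intro x y
    have h1 := norm_sub_sq_real (f x) (f y)
    have h2 := norm_sub_sq_real (g x) (g y)
    have e1 : f x - f y = e x - e y := by simp [hf]
    have e2 : g x - g y = e' x - e' y := by simp [hg]
    rw [e1] at h1; rw [e2] at h2
    have a1 : ‖e x - e y‖ ^ 2 = ‖e' x - e' y‖ ^ 2 := by rw [← he, ← he']
    have a2 : ‖f x‖ ^ 2 = ‖g x‖ ^ 2 := by
      show ‖e x - e x₀‖ ^ 2 = ‖e' x - e' x₀‖ ^ 2
      rw [← he, ← he']
    have a3 : ‖f y‖ ^ 2 = ‖g y‖ ^ 2 := by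
      show ‖e y - e x₀‖ ^ 2 = ‖e' y - e' x₀‖ ^ 2
      rw [← he, ← he']
    linarith
  have hvs : vectorSpan ℝ (Set.range e) = Submodule.span ℝ (Set.range f) := by
    apply le_antisymm
    · rw [vectorSpan_def]
      apply Submodule.span_le.mpr
      rintro v ⟨a, ⟨x, rfl⟩, b, ⟨y, rfl⟩, rfl⟩
      have hxy : e x - e y = f x - f y := by simp [hf]
      show e x -ᵥ e y ∈ Submodule.span ℝ (Set.range f)
      rw [vsub_eq_sub, hxy]
      exact Submodule.sub_mem _ (Submodule.subset_span ⟨x, rfl⟩)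
        (Submodule.subset_span ⟨y, rfl⟩)
    · apply Submodule.span_le.mpr
      rintro v ⟨x, rfl⟩
      show e x - e x₀ ∈ vectorSpan ℝ (Set.range e)
      rw [← vsub_eq_sub]
      exact vsub_mem_vectorSpan ℝ ⟨x, rfl⟩ ⟨x₀, rfl⟩
  have hmem : ∀ p ∈ ((affineSpan ℝ (Set.range e) : AffineSubspace ℝ E) : Set E),
      p - e x₀ ∈ Submodule.span ℝ (Set.range f) := by
    intro p hp
    rw [← hvs]
    have h := AffineSubspace.vsub_mem_direction hp (mem_affineSpan ℝ ⟨x₀, rfl⟩)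
    rwa [direction_affineSpan] at h
  have hdsp : Dense ((Submodule.span ℝ (Set.range f) : Submodule ℝ E) : Set E) := by
    have hden2 : Dense ((Homeomorph.subRight (e x₀)) ''
        ((affineSpan ℝ (Set.range e) : AffineSubspace ℝ E) : Set E)) := by
      rw [dense_iff_closure_eq, ← Homeomorph.image_closure, hdense.closure_eq, Set.image_univ,
        Homeomorph.range_coe]
    refine hden2.mono ?_
    rintro q ⟨p, hp, rfl⟩
    exact hmem p hp
  obtain ⟨T, hT⟩ := extend_isom f g hinner hdsp
  set u : E →ᵃⁱ[ℝ] E' :=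
    ((AffineIsometryEquiv.vaddConst ℝ (e' x₀)).toAffineIsometry.comp
      (T.toAffineIsometry.comp
        (AffineIsometryEquiv.vaddConst ℝ (e x₀)).symm.toAffineIsometry)) with hu_def
  have hu : ∀ x, e' x = u (e x) := by
    intro x
    have h1 : u (e x) = T (e x -ᵥ e x₀) +ᵥ e' x₀ := rfl
    rw [h1, vsub_eq_sub, hT x]
    show e' x = e' x - e' x₀ + e' x₀
    abel
  refine ⟨u, hu, ?_⟩
  intro v hv
  have hagree : Set.EqOn ⇑v ⇑u ((affineSpan ℝ (Set.range e) : AffineSubspace ℝ E) : Set E) := by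
    intro q hq
    have hq' : q ∈ affineSpan ℝ (Set.range e) := hq
    refine affineSpan_induction (p := fun z => v z = u z) hq' ?_ ?_
    · rintro z ⟨y, rfl⟩
      exact (hv y).symm.trans (hu y)
    · intro c a b w ha hb hw
      show v (c • (a -ᵥ b) +ᵥ w) = u (c • (a -ᵥ b) +ᵥ w)
      rw [v.map_vadd, u.map_vadd, LinearIsometry.map_smul, LinearIsometry.map_smul,
        v.map_vsub, u.map_vsub, ha, hb, hw]
  have hfun : ⇑v = ⇑u := Continuous.ext_on hdense v.continuous u.continuous hagree
  exact AffineIsometry.ext fun p => congrFun hfun p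
end
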